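/- arXiv:2205.07266 — 2 statements merged into one kernel-verified Lean document; each statement's English description precedes it below -/
import Mathlib

section
/- Symmetry property: if two distinct variables i, j ∈ N satisfy f(S∪{i}) = f(S∪{j}) for all S ⊆ N∖{i,j}, then for every order m and every k ∈ N with k ≠ i and k ≠ j, I^(m)(i,k) = I^(m)(j,k). -/
open Finset

private lemma swap_image_mem {N : Type*} [Fintype N] [DecidableEq N]
    {i j k : N} (hki : k ≠ i) (hkj : k ≠ j) {m : ℕ} {S : Finset N}
    (hS : S ∈ ((Finset.univ \ {i, k} : Finset N).powersetCard m)) :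
    S.image (Equiv.swap i j) ∈ ((Finset.univ \ {j, k} : Finset N).powersetCard m) := by
  rw [Finset.mem_powersetCard] at hS ⊢
  refine ⟨?_, by rw [Finset.card_image_of_injective _ (Equiv.injective _)]; exact hS.2⟩
  intro x hx
  simp only [Finset.mem_image] at hx
  obtain ⟨a, ha, rfl⟩ := hx
  have ha' := hS.1 ha
  simp only [Finset.mem_sdiff, Finset.mem_univ, Finset.mem_insert, Finset.mem_singleton,
    true_and] at ha' ⊢
  push_neg at ha' ⊢
  refine ⟨fun h => ha'.1 ((Equiv.swap i j).injective (h.trans (Equiv.swap_apply_left i j).symm)), ?_⟩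
  intro h
  exact ha'.2 ((Equiv.swap i j).injective (by rw [h, Equiv.swap_apply_of_ne_of_ne hki hkj]))

private lemma image_swap_of_not_mem {N : Type*} [DecidableEq N]
    {i j : N} {S : Finset N} (hi : i ∉ S) (hj : j ∉ S) :
    S.image (Equiv.swap i j) = S := by
  rw [Finset.image_congr (g := id), Finset.image_id]
  intro a ha
  exact Equiv.swap_apply_of_ne_of_ne (ne_of_mem_of_not_mem ha hi) (ne_of_mem_of_not_mem ha hj)

/-- The m-th order multi-order interaction between players `i` and `j` for a game `f`. -/
noncomputable def interaction {N : Type*} [Fintype N] [DecidableEq N]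
    (f : Finset N → ℝ) (m : ℕ) (i j : N) : ℝ :=
  ((Fintype.card N - 2).choose m : ℝ)⁻¹ *
    ∑ S ∈ ((Finset.univ \ {i, j} : Finset N).powersetCard m),
      (f (S ∪ {i, j}) - f (S ∪ {i}) - f (S ∪ {j}) + f S)

theorem interaction_symmetry {N : Type*} [Fintype N] [DecidableEq N]
    (f : Finset N → ℝ) (i j : N) (hij : i ≠ j)
    (hsym : ∀ S : Finset N, i ∉ S → j ∉ S → f (S ∪ {i}) = f (S ∪ {j})) :
    ∀ (m : ℕ), m ≤ Fintype.card N - 2 → ∀ k : N, k ≠ i → k ≠ j →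
      interaction f m i k = interaction f m j k := by
  intro m hm k hki hkj
  unfold interaction
  congr 1
  apply Finset.sum_bij' (i := fun S _ => S.image (Equiv.swap i j))
    (j := fun T _ => T.image (Equiv.swap i j))
    (fun S hS => swap_image_mem hki hkj hS)
    (fun T hT => by rw [Equiv.swap_comm]; exact swap_image_mem hkj hki hT)
    (fun S _ => by simp [Finset.image_image, Function.comp_def, Equiv.swap_apply_self])
    (fun T _ => by simp [Finset.image_image, Function.comp_def, Equiv.swap_apply_self])
  intro S hS
  rw [Finset.mem_powersetCard] at hS
  have hiS : i ∉ S := fun h => by simpa using (hS.1 h)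
  have hkS : k ∉ S := fun h => by simpa using (hS.1 h)
  by_cases hj : j ∈ S
  · -- j ∈ S : image is insert i (S.erase j)
    set S' := S.erase j with hS'def
    have hiS' : i ∉ S' := fun h => hiS (Finset.mem_of_mem_erase h)
    have hjS' : j ∉ S' := Finset.notMem_erase _ _
    have hkS' : k ∉ S' := fun h => hkS (Finset.mem_of_mem_erase h)
    have himg : S.image (Equiv.swap i j) = insert i S' := by
      conv_lhs => rw [← Finset.insert_erase hj]
      rw [Finset.image_insert, Equiv.swap_apply_right, ← hS'def,
        image_swap_of_not_mem hiS' hjS']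
    rw [himg]
    have ea : S ∪ {i, k} = insert i S' ∪ {j, k} := by
      ext x; by_cases hx : x = j <;> simp [hx, hj, hS'def, Finset.mem_erase] <;> tauto
    have eb : S ∪ {i} = insert i S' ∪ {j} := by
      ext x; by_cases hx : x = j <;> simp [hx, hj, hS'def, Finset.mem_erase] <;> tauto
    have hc : f (S ∪ {k}) = f (insert i S' ∪ {k}) := by
      have h1 := hsym (S' ∪ {k}) (by simp [hiS', hki.symm]) (by simp [hjS', hkj.symm])
      have ec1 : S' ∪ {k} ∪ {i} = insert i S' ∪ {k} := by ext x; simp; tauto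
      have ec2 : S' ∪ {k} ∪ {j} = S ∪ {k} := by
        ext x; by_cases hx : x = j <;> simp [hx, hj, hS'def, Finset.mem_erase] <;> tauto
      rw [ec1, ec2] at h1
      exact h1.symm
    have hd : f S = f (insert i S') := by
      have h1 := hsym S' hiS' hjS'
      have ed1 : S' ∪ {i} = insert i S' := by ext x; simp
      have ed2 : S' ∪ {j} = S := by
        ext x; by_cases hx : x = j <;> simp [hx, hj, hS'def, Finset.mem_erase]
      rw [ed1, ed2] at h1
      exact h1.symm
    rw [ea, eb, hc, hd]
  · -- j ∉ S : image is S itself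
    rw [image_swap_of_not_mem hiS hj]
    have h1 := hsym (S ∪ {k}) (by simp [hiS, hki.symm]) (by simp [hj, hkj.symm])
    have e1 : S ∪ {k} ∪ {i} = S ∪ {i, k} := by ext x; simp; tauto
    have e2 : S ∪ {k} ∪ {j} = S ∪ {j, k} := by ext x; simp; tauto
    rw [e1, e2] at h1
    have h2 := hsym S hiS hj
    rw [h1, h2]
end

section
/- Efficiency property: for any game f on N with |N| = n ≥ 2, the total output decomposes as f(N) − f(∅) = Σ_{i∈N} μ_i + Σ_{i≠j} Σ_{m=0}^{n−2} w^(m) · I^(m)(i,j), where μ_i = f({i}) − f(∅) and w^(m) = (n−1−m)/(n(n−1)). -/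
set_option maxHeartbeats 1000000
open Finset

section AuxCount
variable {α : Type*} [DecidableEq α]

lemma aux_L2 (A : Finset α) (m : ℕ) (f : Finset α → ℝ) :
    ∑ i ∈ A, ∑ S ∈ (A.erase i).powersetCard m, f S
      = ((A.card - m : ℕ) : ℝ) * ∑ S ∈ A.powersetCard m, f S := by
  have h : ∀ i : α, (A.erase i).powersetCard m
      = (A.powersetCard m).filter (fun S => i ∉ S) := by
    intro i; ext S
    simp only [mem_powersetCard, mem_filter, subset_erase]
    tauto
  simp only [h, sum_filter]
  rw [Finset.sum_comm, Finset.mul_sum]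
  refine Finset.sum_congr rfl fun S hS => ?_
  rw [mem_powersetCard] at hS
  rw [← Finset.sum_filter]
  rw [Finset.sum_const]
  have : A.filter (fun i => i ∉ S) = A \ S := by
    ext x; simp [mem_sdiff]
  rw [this, Finset.card_sdiff_of_subset hS.1, hS.2]
  simp [mul_comm]

lemma aux_L1 (A : Finset α) (m : ℕ) (g : α → Finset α → ℝ) :
    ∑ i ∈ A, ∑ S ∈ (A.erase i).powersetCard m, g i S
      = ∑ T ∈ A.powersetCard (m + 1), ∑ i ∈ T, g i (T.erase i) := by
  rw [Finset.sum_sigma' A (fun i => (A.erase i).powersetCard m) (fun i S => g i S),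
    Finset.sum_sigma' (A.powersetCard (m + 1)) (fun T => T) (fun T i => g i (T.erase i))]
  refine Finset.sum_nbij' (fun x => ⟨insert x.1 x.2, x.1⟩) (fun y => ⟨y.2, y.1.erase y.2⟩)
    ?_ ?_ ?_ ?_ ?_
  · rintro ⟨i, S⟩ hx
    simp only [mem_sigma, mem_powersetCard, subset_erase] at hx ⊢
    obtain ⟨hi, ⟨hSA, hiS⟩, hcard⟩ := hx
    exact ⟨⟨insert_subset hi hSA, by rw [card_insert_of_notMem hiS, hcard]⟩,
      mem_insert_self _ _⟩
  · rintro ⟨T, i⟩ hy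
    simp only [mem_sigma, mem_powersetCard, subset_erase] at hy ⊢
    obtain ⟨⟨hTA, hcard⟩, hiT⟩ := hy
    refine ⟨hTA hiT, ⟨(erase_subset _ _).trans hTA, notMem_erase _ _⟩, ?_⟩
    rw [card_erase_of_mem hiT, hcard]; rfl
  · rintro ⟨i, S⟩ hx
    simp only [mem_sigma, mem_powersetCard, subset_erase] at hx
    simp [erase_insert hx.2.1.2]
  · rintro ⟨T, i⟩ hy
    simp only [mem_sigma] at hy
    simp [insert_erase hy.2]
  · rintro ⟨i, S⟩ hx
    simp only [mem_sigma, mem_powersetCard, subset_erase] at hx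
    simp [erase_insert hx.2.1.2]

end AuxCount

section Cnt
variable {N : Type*} [Fintype N] [DecidableEq N]

lemma cntA (f : Finset N → ℝ) (m : ℕ) :
    ∑ i : N, ∑ j ∈ univ.erase i, ∑ S ∈ ((univ.erase i).erase j).powersetCard m,
        f (insert i (insert j S))
      = (((m+2) * (m+1) : ℕ) : ℝ) * ∑ T ∈ (univ : Finset N).powersetCard (m+2), f T := by
  have step1 : ∀ i : N, ∑ j ∈ univ.erase i, ∑ S ∈ ((univ.erase i).erase j).powersetCard m,
      f (insert i (insert j S))
        = ∑ U ∈ (univ.erase i).powersetCard (m+1), ((m+1 : ℕ) : ℝ) * f (insert i U) := by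
    intro i
    rw [aux_L1 (univ.erase i) m (fun j S => f (insert i (insert j S)))]
    refine sum_congr rfl fun U hU => ?_
    rw [mem_powersetCard] at hU
    rw [show ∑ j ∈ U, f (insert i (insert j (U.erase j))) = ∑ j ∈ U, f (insert i U) from
      sum_congr rfl fun j hj => by rw [insert_erase hj]]
    rw [sum_const, hU.2, nsmul_eq_mul]
  simp only [step1, ← Finset.mul_sum]
  rw [aux_L1 univ (m+1) (fun i U => f (insert i U))]
  have h2 : ∑ T ∈ (univ : Finset N).powersetCard (m+1+1), ∑ i ∈ T, f (insert i (T.erase i))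
      = ∑ T ∈ (univ : Finset N).powersetCard (m+1+1), ((m+2 : ℕ) : ℝ) * f T := by
    refine sum_congr rfl fun T hT => ?_
    rw [mem_powersetCard] at hT
    rw [show ∑ i ∈ T, f (insert i (T.erase i)) = ∑ i ∈ T, f T from
      sum_congr rfl fun i hi => by rw [insert_erase hi]]
    rw [sum_const, hT.2, nsmul_eq_mul]
  rw [h2, ← Finset.mul_sum]
  push_cast; ring

lemma cntB (f : Finset N → ℝ) (m : ℕ) :
    ∑ i : N, ∑ j ∈ univ.erase i, ∑ S ∈ ((univ.erase i).erase j).powersetCard m,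
        f (insert i S)
      = (((Fintype.card N - 1 - m) * (m+1) : ℕ) : ℝ)
          * ∑ T ∈ (univ : Finset N).powersetCard (m+1), f T := by
  have step1 : ∀ i : N, ∑ j ∈ univ.erase i, ∑ S ∈ ((univ.erase i).erase j).powersetCard m,
      f (insert i S)
        = ((Fintype.card N - 1 - m : ℕ) : ℝ) * ∑ S ∈ (univ.erase i).powersetCard m,
            f (insert i S) := by
    intro i
    rw [aux_L2 (univ.erase i) m (fun S => f (insert i S)),
      card_erase_of_mem (mem_univ i), card_univ]
  simp only [step1, ← Finset.mul_sum]
  rw [aux_L1 univ m (fun i S => f (insert i S))]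
  have h2 : ∑ T ∈ (univ : Finset N).powersetCard (m+1), ∑ i ∈ T, f (insert i (T.erase i))
      = ∑ T ∈ (univ : Finset N).powersetCard (m+1), ((m+1 : ℕ) : ℝ) * f T := by
    refine sum_congr rfl fun T hT => ?_
    rw [mem_powersetCard] at hT
    rw [show ∑ i ∈ T, f (insert i (T.erase i)) = ∑ i ∈ T, f T from
      sum_congr rfl fun i hi => by rw [insert_erase hi]]
    rw [sum_const, hT.2, nsmul_eq_mul]
  rw [h2, ← Finset.mul_sum]
  push_cast; ring

lemma cntB' (f : Finset N → ℝ) (m : ℕ) :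
    ∑ i : N, ∑ j ∈ univ.erase i, ∑ S ∈ ((univ.erase i).erase j).powersetCard m,
        f (insert j S)
      = (((Fintype.card N - 1 - m) * (m+1) : ℕ) : ℝ)
          * ∑ T ∈ (univ : Finset N).powersetCard (m+1), f T := by
  have hswap : ∀ x y : N, x ∈ (univ : Finset N) ∧ y ∈ univ.erase x
      ↔ x ∈ univ.erase y ∧ y ∈ (univ : Finset N) := by
    intro x y
    simp only [mem_univ, true_and, and_true, mem_erase]
    exact ne_comm
  rw [Finset.sum_comm'
    (f := fun i j => ∑ S ∈ ((univ.erase i).erase j).powersetCard m, f (insert j S)) hswap]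
  have h2 : ∀ j : N, ∑ i ∈ univ.erase j,
      ∑ S ∈ ((univ.erase i).erase j).powersetCard m, f (insert j S)
        = ∑ i ∈ univ.erase j, ∑ S ∈ ((univ.erase j).erase i).powersetCard m, f (insert j S) :=
    fun j => sum_congr rfl fun i _ => by rw [Finset.erase_right_comm]
  simp only [h2]
  exact cntB f m

lemma cntC (f : Finset N → ℝ) (m : ℕ) :
    ∑ i : N, ∑ j ∈ univ.erase i, ∑ S ∈ ((univ.erase i).erase j).powersetCard m, f S
      = (((Fintype.card N - m) * (Fintype.card N - 1 - m) : ℕ) : ℝ)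
          * ∑ T ∈ (univ : Finset N).powersetCard m, f T := by
  have step1 : ∀ i : N, ∑ j ∈ univ.erase i, ∑ S ∈ ((univ.erase i).erase j).powersetCard m, f S
      = ((Fintype.card N - 1 - m : ℕ) : ℝ) * ∑ S ∈ (univ.erase i).powersetCard m, f S := by
    intro i
    rw [aux_L2 (univ.erase i) m f, card_erase_of_mem (mem_univ i), card_univ]
  simp only [step1]
  rw [← Finset.mul_sum, aux_L2 univ m f, card_univ]
  push_cast
  ring

end Cnt

lemma key_arith (m k : ℕ) (G0 G1 G2 : ℝ) :
    (((m:ℝ) + k + 2) - 1 - m) / (((m:ℝ) + k + 2) * (((m:ℝ) + k + 2) - 1))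
        * (((m + k).choose m : ℝ))⁻¹ *
      ((((m+2) * (m+1) : ℕ) : ℝ) * G2 - (((k+1) * (m+1) : ℕ) : ℝ) * G1
        - (((k+1) * (m+1) : ℕ) : ℝ) * G1 + (((k+2) * (k+1) : ℕ) : ℝ) * G0)
  = (((m+2).factorial : ℝ) * (((k+1)).factorial : ℝ) / (((m+k+2)).factorial : ℝ) * G2
      - ((k : ℕ) : ℝ) * ((m+1).factorial : ℝ) * ((k+1).factorial : ℝ)
          / ((m+k+2).factorial : ℝ) * G1)
    - (((m+1).factorial : ℝ) * ((k+2).factorial : ℝ) / ((m+k+2).factorial : ℝ) * G1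
      - ((k+1 : ℕ) : ℝ) * (m.factorial : ℝ) * ((k+2).factorial : ℝ)
          / ((m+k+2).factorial : ℝ) * G0) := by
  have hc : (((m + k).choose m : ℕ) : ℝ)
      = ((m+k).factorial : ℝ) / ((m.factorial : ℝ) * (k.factorial : ℝ)) := by
    rw [Nat.cast_choose ℝ (Nat.le_add_right m k), Nat.add_sub_cancel_left]
  have hf1 : ((m+1).factorial : ℝ) = ((m:ℝ)+1) * m.factorial := by
    rw [Nat.factorial_succ]; push_cast; ring
  have hf2 : ((m+2).factorial : ℝ) = ((m:ℝ)+2) * ((m:ℝ)+1) * m.factorial := by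
    rw [show m+2 = (m+1)+1 by omega, Nat.factorial_succ, Nat.factorial_succ]; push_cast; ring
  have hg1 : ((k+1).factorial : ℝ) = ((k:ℝ)+1) * k.factorial := by
    rw [Nat.factorial_succ]; push_cast; ring
  have hg2 : ((k+2).factorial : ℝ) = ((k:ℝ)+2) * ((k:ℝ)+1) * k.factorial := by
    rw [show k+2 = (k+1)+1 by omega, Nat.factorial_succ, Nat.factorial_succ]; push_cast; ring
  have hn2 : ((m+k+2).factorial : ℝ)
      = ((m:ℝ)+(k:ℝ)+2) * ((m:ℝ)+(k:ℝ)+1) * (m+k).factorial := by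
    rw [show m+k+2 = (m+k+1)+1 by omega, Nat.factorial_succ, Nat.factorial_succ]; push_cast; ring
  have h0 : (m.factorial : ℝ) ≠ 0 := Nat.cast_ne_zero.mpr (Nat.factorial_ne_zero m)
  have h1 : (k.factorial : ℝ) ≠ 0 := Nat.cast_ne_zero.mpr (Nat.factorial_ne_zero k)
  have h2 : ((m+k).factorial : ℝ) ≠ 0 := Nat.cast_ne_zero.mpr (Nat.factorial_ne_zero _)
  have h3 : ((m:ℝ)+(k:ℝ)+2) ≠ 0 := by positivity
  have h4 : ((m:ℝ)+(k:ℝ)+1) ≠ 0 := by positivity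
  have hinv : (((m + k).choose m : ℕ) : ℝ)⁻¹
      = ((m.factorial : ℝ) * (k.factorial : ℝ)) / ((m+k).factorial : ℝ) := by
    rw [hc, inv_div]
  have e1 : ((m:ℝ) + k + 2) - 1 - m = (k:ℝ) + 1 := by ring
  have e2 : ((m:ℝ) + k + 2) - 1 = (m:ℝ) + k + 1 := by ring
  rw [hinv, e1, e2, hf1, hf2, hg1, hg2, hn2]
  push_cast
  field_simp
  ring

theorem interaction_efficiency {N : Type*} [Fintype N] [DecidableEq N]
    (f : Finset N → ℝ) (hn : 2 ≤ Fintype.card N) :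
    f Finset.univ - f ∅
      = (∑ i : N, (f {i} - f ∅))
        + ∑ i : N, ∑ j ∈ Finset.univ.erase i,
            ∑ m ∈ Finset.range (Fintype.card N - 1),
              (((Fintype.card N : ℝ) - 1 - m) /
                ((Fintype.card N : ℝ) * ((Fintype.card N : ℝ) - 1)))
                * interaction f m i j := by
  classical
  set n := Fintype.card N with hnn
  set D : ℕ → ℝ := fun m =>
      ((m+1).factorial : ℝ) * ((n - m).factorial : ℝ) / (n.factorial : ℝ)
          * ∑ T ∈ (univ : Finset N).powersetCard (m+1), f T
        - ((n - 1 - m : ℕ) : ℝ) * (m.factorial : ℝ) * ((n - m).factorial : ℝ) / (n.factorial : ℝ)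
          * ∑ T ∈ (univ : Finset N).powersetCard m, f T with hD
  have key : ∀ m ∈ Finset.range (n - 1),
      (∑ i : N, ∑ j ∈ (univ : Finset N).erase i,
          (((n : ℝ) - 1 - m) / ((n : ℝ) * ((n : ℝ) - 1))) * interaction f m i j)
        = D (m+1) - D m := by
    intro m hm
    rw [Finset.mem_range] at hm
    obtain ⟨k, hk⟩ : ∃ k, n = m + k + 2 := ⟨n - m - 2, by omega⟩
    simp only [interaction, ← hnn]
    have hset : ∀ i j : N, ((univ : Finset N) \ {i, j}) = (univ.erase i).erase j := by
      intro i j; ext x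
      simp only [mem_sdiff, mem_insert, mem_singleton, mem_erase, mem_univ, true_and, and_true]
      tauto
    have hu2 : ∀ (i j : N) (S : Finset N), S ∪ {i, j} = insert i (insert j S) := by
      intro i j S; ext x
      simp only [mem_union, mem_insert, mem_singleton]
      tauto
    have hu1 : ∀ (i : N) (S : Finset N), S ∪ {i} = insert i S := by
      intro i S; ext x
      simp only [mem_union, mem_insert, mem_singleton]
      tauto
    simp only [hset, hu2, hu1]
    simp only [← mul_assoc, ← Finset.mul_sum]
    simp only [Finset.sum_add_distrib, Finset.sum_sub_distrib]
    rw [cntA f m, cntB f m, cntB' f m, cntC f m]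
    rw [show Fintype.card N - 1 - m = k + 1 by omega,
      show Fintype.card N - m = k + 2 by omega,
      show Fintype.card N - 2 = m + k by omega]
    simp only [hD]
    rw [hk]
    rw [show m + k + 2 - (m + 1) = k + 1 by omega,
      show m + k + 2 - 1 - (m + 1) = k by omega,
      show m + k + 2 - 1 - m = k + 1 by omega,
      show m + k + 2 - m = k + 2 by omega,
      show m + 1 + 1 = m + 2 from rfl]
    have harith := key_arith m k
      (∑ T ∈ (univ : Finset N).powersetCard m, f T)
      (∑ T ∈ (univ : Finset N).powersetCard (m+1), f T)
      (∑ T ∈ (univ : Finset N).powersetCard (m+2), f T)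
    push_cast at harith ⊢
    linear_combination harith
  have swap : (∑ i : N, ∑ j ∈ (univ : Finset N).erase i,
        ∑ m ∈ Finset.range (n - 1),
          (((n : ℝ) - 1 - m) / ((n : ℝ) * ((n : ℝ) - 1))) * interaction f m i j)
      = ∑ m ∈ Finset.range (n - 1), ∑ i : N, ∑ j ∈ (univ : Finset N).erase i,
          (((n : ℝ) - 1 - m) / ((n : ℝ) * ((n : ℝ) - 1))) * interaction f m i j := by
    rw [Finset.sum_comm]
    exact Finset.sum_congr rfl fun m _ => Finset.sum_comm
  rw [swap, Finset.sum_congr rfl key, Finset.sum_range_sub D (n - 1)]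
  have hfact : (n.factorial : ℝ) ≠ 0 := Nat.cast_ne_zero.mpr (Nat.factorial_ne_zero n)
  have hd1 : D (n - 1) = f Finset.univ := by
    simp only [hD]
    rw [show n - 1 + 1 = n by omega, show n - (n - 1) = 1 by omega,
      show n - 1 - (n - 1) = 0 by omega]
    rw [show (univ : Finset N).powersetCard n = {univ} by
      rw [hnn, ← card_univ, powersetCard_self]]
    rw [sum_singleton]
    simp [Nat.factorial]
    field_simp
  have hd0 : D 0 = (∑ i : N, f {i}) - ((n : ℝ) - 1) * f ∅ := by
    simp only [hD]
    rw [show n - 0 = n by omega]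
    rw [powersetCard_one, Finset.sum_map]
    rw [show (univ : Finset N).powersetCard 0 = {∅} from powersetCard_zero univ]
    rw [sum_singleton]
    have hcast : ((n - 1 : ℕ) : ℝ) = (n : ℝ) - 1 := by
      rw [Nat.cast_sub (by omega : 1 ≤ n)]; norm_num
    rw [show n - 1 - 0 = n - 1 by omega, hcast]
    simp [Nat.factorial]
    field_simp
  rw [hd1, hd0]
  rw [Finset.sum_sub_distrib, Finset.sum_const, card_univ, ← hnn, nsmul_eq_mul]
  ring
end
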